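/- If both ℓ^p and ℓ^m are the least squares loss (ℓ(r) = ½‖r‖²), G is invertible, and Q, R are PSD with square roots Q^{1/2}, R^{1/2}, then the KKT saddle-point matrix of the singular smoothing Lagrangian is invertible if and only if H G^{-1} Q G^{-T} H^T + R is invertible, if and only if Null(R) ∩ Null(Q G^{-T} H^T) = {0}. -/
import Mathlib


open Matrix

private lemma dot_self_psd' {m n : Type*} [Fintype m] [Fintype n] (M : Matrix m n ℝ) (v : m → ℝ) :
    v ⬝ᵥ (M * Mᵀ) *ᵥ v = (Mᵀ *ᵥ v) ⬝ᵥ (Mᵀ *ᵥ v) := by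
  rw [← mulVec_mulVec, dotProduct_mulVec, ← mulVec_transpose]

private lemma psd_sum_mulVec_eq_zero' {m a b : Type*} [Fintype m] [Fintype a] [Fintype b]
    (M₁ : Matrix m a ℝ) (M₂ : Matrix m b ℝ) (v : m → ℝ) :
    (M₁ * M₁ᵀ + M₂ * M₂ᵀ) *ᵥ v = 0 ↔ M₁ᵀ *ᵥ v = 0 ∧ M₂ᵀ *ᵥ v = 0 := by
  constructor
  · intro h
    have hd : (M₁ᵀ *ᵥ v) ⬝ᵥ (M₁ᵀ *ᵥ v) + (M₂ᵀ *ᵥ v) ⬝ᵥ (M₂ᵀ *ᵥ v) = 0 := by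
      rw [← dot_self_psd', ← dot_self_psd', ← dotProduct_add, ← add_mulVec, h, dotProduct_zero]
    have h1 : (0:ℝ) ≤ (M₁ᵀ *ᵥ v) ⬝ᵥ (M₁ᵀ *ᵥ v) :=
      Finset.sum_nonneg fun i _ => mul_self_nonneg _
    have h2 : (0:ℝ) ≤ (M₂ᵀ *ᵥ v) ⬝ᵥ (M₂ᵀ *ᵥ v) :=
      Finset.sum_nonneg fun i _ => mul_self_nonneg _
    exact ⟨dotProduct_self_eq_zero.mp (le_antisymm (by linarith) h1),
      dotProduct_self_eq_zero.mp (le_antisymm (by linarith) h2)⟩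
  · rintro ⟨h1, h2⟩
    rw [add_mulVec, ← mulVec_mulVec, ← mulVec_mulVec, h1, h2, mulVec_zero, mulVec_zero, add_zero]

private lemma psd_mulVec_eq_zero' {m a : Type*} [Fintype m] [Fintype a]
    (M : Matrix m a ℝ) (v : m → ℝ) :
    (M * Mᵀ) *ᵥ v = 0 ↔ Mᵀ *ᵥ v = 0 := by
  have := psd_sum_mulVec_eq_zero' M (0 : Matrix m a ℝ) v
  simpa using this

private lemma isUnit_iff_allker' {n : Type*} [Fintype n] [DecidableEq n] (A : Matrix n n ℝ) :
    IsUnit A ↔ ∀ v, A *ᵥ v = 0 → v = 0 := by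
  rw [← Matrix.mulVec_injective_iff_isUnit]
  constructor
  · intro h v hv
    exact h (by simpa using hv)
  · intro h u w huw
    exact sub_eq_zero.mp (h (u - w) (by rw [Matrix.mulVec_sub, huw, sub_self]))

/-- Least-squares singular smoother: with `ℓᵖ = ℓᵐ = ½‖·‖²` (so the loss Hessian
blocks are identities), `G` invertible, `Q = Qh Qhᵀ`, `R = Rh Rhᵀ`, the KKT
saddle-point matrix is invertible iff `H G⁻¹ Q G⁻ᵀ Hᵀ + R` is invertible, iff
`Null(R) ∩ Null(Q G⁻ᵀ Hᵀ) = {0}`. -/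
theorem kkt_least_squares_invertible_iff
    {d p : ℕ}
    (G Qh : Matrix (Fin d) (Fin d) ℝ)
    (H : Matrix (Fin p) (Fin d) ℝ)
    (Rh : Matrix (Fin p) (Fin p) ℝ)
    (hG : IsUnit G.det)
    (Q : Matrix (Fin d) (Fin d) ℝ) (hQ : Q = Qh * Qhᵀ)
    (R : Matrix (Fin p) (Fin p) ℝ) (hR : R = Rh * Rhᵀ)
    (K : Matrix (Fin d ⊕ Fin d ⊕ Fin p ⊕ Fin d ⊕ Fin p)
               (Fin d ⊕ Fin d ⊕ Fin p ⊕ Fin d ⊕ Fin p) ℝ)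
    (hK : K = Matrix.of fun i j =>
      match i, j with
      | Sum.inl a, Sum.inr (Sum.inr (Sum.inr (Sum.inl b))) => Gᵀ a b
      | Sum.inl a, Sum.inr (Sum.inr (Sum.inr (Sum.inr b))) => Hᵀ a b
      | Sum.inr (Sum.inl a), Sum.inr (Sum.inl b) => if a = b then (1 : ℝ) else 0
      | Sum.inr (Sum.inl a), Sum.inr (Sum.inr (Sum.inr (Sum.inl b))) => -Qhᵀ a b
      | Sum.inr (Sum.inr (Sum.inl a)), Sum.inr (Sum.inr (Sum.inl b)) =>
          if a = b then (1 : ℝ) else 0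
      | Sum.inr (Sum.inr (Sum.inl a)), Sum.inr (Sum.inr (Sum.inr (Sum.inr b))) => -Rhᵀ a b
      | Sum.inr (Sum.inr (Sum.inr (Sum.inl a))), Sum.inl b => G a b
      | Sum.inr (Sum.inr (Sum.inr (Sum.inl a))), Sum.inr (Sum.inl b) => -Qh a b
      | Sum.inr (Sum.inr (Sum.inr (Sum.inr a))), Sum.inl b => H a b
      | Sum.inr (Sum.inr (Sum.inr (Sum.inr a))), Sum.inr (Sum.inr (Sum.inl b)) => -Rh a b
      | _, _ => 0) :
    (IsUnit K ↔ IsUnit (H * G⁻¹ * Q * (G⁻¹)ᵀ * Hᵀ + R)) ∧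
    (IsUnit (H * G⁻¹ * Q * (G⁻¹)ᵀ * Hᵀ + R) ↔
      LinearMap.ker R.mulVecLin ⊓
        LinearMap.ker (Q * (G⁻¹)ᵀ * Hᵀ).mulVecLin = ⊥) := by
  have hGmul : G * G⁻¹ = 1 := mul_nonsing_inv G hG
  have hGmul' : G⁻¹ * G = 1 := nonsing_inv_mul G hG
  have hGT : Gᵀ * (G⁻¹)ᵀ = 1 := by rw [← transpose_mul, hGmul', transpose_one]
  have hGT' : (G⁻¹)ᵀ * Gᵀ = 1 := by rw [← transpose_mul, hGmul, transpose_one]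
  have hSfact : H * G⁻¹ * Q * (G⁻¹)ᵀ * Hᵀ + R
      = (H * G⁻¹ * Qh) * (H * G⁻¹ * Qh)ᵀ + Rh * Rhᵀ := by
    rw [hQ, hR]
    simp [transpose_mul, Matrix.mul_assoc]
  -- kernel characterization of S
  have hSker : ∀ w : Fin p → ℝ, (H * G⁻¹ * Q * (G⁻¹)ᵀ * Hᵀ + R) *ᵥ w = 0 ↔
      ((H * G⁻¹ * Qh)ᵀ *ᵥ w = 0 ∧ Rhᵀ *ᵥ w = 0) := by
    intro w
    rw [hSfact]
    exact psd_sum_mulVec_eq_zero' _ _ w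
  have hRker : ∀ w, R *ᵥ w = 0 ↔ Rhᵀ *ᵥ w = 0 := fun w => by
    rw [hR]; exact psd_mulVec_eq_zero' _ _
  have hQGH : ∀ w, (Q * (G⁻¹)ᵀ * Hᵀ) *ᵥ w = 0 ↔ (H * G⁻¹ * Qh)ᵀ *ᵥ w = 0 := by
    intro w
    have h1 : (Q * (G⁻¹)ᵀ * Hᵀ) *ᵥ w = (Qh * Qhᵀ) *ᵥ (((G⁻¹)ᵀ * Hᵀ) *ᵥ w) := by
      rw [mulVec_mulVec, hQ, Matrix.mul_assoc]
    have h2 : (H * G⁻¹ * Qh)ᵀ *ᵥ w = Qhᵀ *ᵥ (((G⁻¹)ᵀ * Hᵀ) *ᵥ w) := by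
      rw [mulVec_mulVec]
      simp [transpose_mul, Matrix.mul_assoc]
    rw [h1, h2, psd_mulVec_eq_zero']
  have hSker' : ∀ w, (H * G⁻¹ * Q * (G⁻¹)ᵀ * Hᵀ + R) *ᵥ w = 0 ↔
      (R *ᵥ w = 0 ∧ (Q * (G⁻¹)ᵀ * Hᵀ) *ᵥ w = 0) := by
    intro w
    rw [hSker, hRker, hQGH]
    tauto
  constructor
  · -- IsUnit K ↔ IsUnit S
    rw [isUnit_iff_allker' K, isUnit_iff_allker' (H * G⁻¹ * Q * (G⁻¹)ᵀ * Hᵀ + R)]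
    constructor
    · intro hKinj w hw
      obtain ⟨hq, hr⟩ := (hSker w).mp hw
      set lp : Fin d → ℝ := -((G⁻¹)ᵀ *ᵥ (Hᵀ *ᵥ w)) with hlp
      set v : (Fin d ⊕ Fin d ⊕ Fin p ⊕ Fin d ⊕ Fin p) → ℝ :=
        Sum.elim (0 : Fin d → ℝ) (Sum.elim (0 : Fin d → ℝ)
          (Sum.elim (0 : Fin p → ℝ) (Sum.elim lp w))) with hv
      have E1 : Gᵀ *ᵥ lp + Hᵀ *ᵥ w = 0 := by
        rw [hlp, Matrix.mulVec_neg, mulVec_mulVec, hGT, one_mulVec, neg_add_cancel]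
      have E2 : Qhᵀ *ᵥ lp = 0 := by
        have hq' : (Qhᵀ * ((G⁻¹)ᵀ * Hᵀ)) *ᵥ w = 0 := by
          rw [show Qhᵀ * ((G⁻¹)ᵀ * Hᵀ) = (H * G⁻¹ * Qh)ᵀ by
            simp [transpose_mul, Matrix.mul_assoc]]
          exact hq
        rw [hlp, Matrix.mulVec_neg, mulVec_mulVec, mulVec_mulVec, ← Matrix.mul_assoc] at *
        rw [hq', neg_zero]
      have hKv : K *ᵥ v = 0 := by
        funext i
        rcases i with a | a | a | a | a
        · have := congrFun E1 a
          simp [Matrix.mulVec, dotProduct] at this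
          simp [hK, hv, Matrix.mulVec, dotProduct, Fintype.sum_sum_type]
          linarith
        · have := congrFun E2 a
          simp [Matrix.mulVec, dotProduct] at this
          simp [hK, hv, Matrix.mulVec, dotProduct, Fintype.sum_sum_type]
          linarith
        · have := congrFun hr a
          simp [Matrix.mulVec, dotProduct] at this
          simp [hK, hv, Matrix.mulVec, dotProduct, Fintype.sum_sum_type]
          linarith
        · simp [hK, hv, Matrix.mulVec, dotProduct, Fintype.sum_sum_type]
        · simp [hK, hv, Matrix.mulVec, dotProduct, Fintype.sum_sum_type]
      have hv0 := hKinj v hKv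
      funext a
      have := congrFun hv0 (Sum.inr (Sum.inr (Sum.inr (Sum.inr a))))
      simpa [hv] using this
    · intro hSinj v hv
      set x : Fin d → ℝ := fun a => v (.inl a) with hx
      set rp : Fin d → ℝ := fun a => v (.inr (.inl a)) with hrp
      set rm : Fin p → ℝ := fun a => v (.inr (.inr (.inl a))) with hrm
      set lp : Fin d → ℝ := fun a => v (.inr (.inr (.inr (.inl a)))) with hlp
      set lm : Fin p → ℝ := fun a => v (.inr (.inr (.inr (.inr a)))) with hlm
      have e1 : Gᵀ *ᵥ lp + Hᵀ *ᵥ lm = 0 := by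
        funext a
        have := congrFun hv (Sum.inl a)
        simpa [hK, Matrix.mulVec, dotProduct, Fintype.sum_sum_type] using this
      have e2 : rp = Qhᵀ *ᵥ lp := by
        funext a
        have := congrFun hv (Sum.inr (Sum.inl a))
        simp [hK, Matrix.mulVec, dotProduct, Fintype.sum_sum_type, ite_mul, neg_mul] at this
        simp [hrp, hlp, Matrix.mulVec, dotProduct, Matrix.transpose_apply]
        linarith [this]
      have e3 : rm = Rhᵀ *ᵥ lm := by
        funext a
        have := congrFun hv (Sum.inr (Sum.inr (Sum.inl a)))
        simp [hK, Matrix.mulVec, dotProduct, Fintype.sum_sum_type, ite_mul, neg_mul] at this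
        simp [hrm, hlm, Matrix.mulVec, dotProduct, Matrix.transpose_apply]
        linarith [this]
      have e4 : G *ᵥ x = Qh *ᵥ rp := by
        funext a
        have := congrFun hv (Sum.inr (Sum.inr (Sum.inr (Sum.inl a))))
        simp [hK, Matrix.mulVec, dotProduct, Fintype.sum_sum_type, neg_mul] at this
        simp [hx, hrp, Matrix.mulVec, dotProduct]
        linarith [this]
      have e5 : H *ᵥ x = Rh *ᵥ rm := by
        funext a
        have := congrFun hv (Sum.inr (Sum.inr (Sum.inr (Sum.inr a))))
        simp [hK, Matrix.mulVec, dotProduct, Fintype.sum_sum_type, neg_mul] at this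
        simp [hx, hrm, Matrix.mulVec, dotProduct]
        linarith [this]
      have hlp_eq : lp = -((G⁻¹)ᵀ *ᵥ (Hᵀ *ᵥ lm)) := by
        have h1 : Gᵀ *ᵥ lp = -(Hᵀ *ᵥ lm) := by
          rw [eq_neg_iff_add_eq_zero]; exact e1
        calc lp = ((G⁻¹)ᵀ * Gᵀ) *ᵥ lp := by rw [hGT', one_mulVec]
        _ = (G⁻¹)ᵀ *ᵥ (Gᵀ *ᵥ lp) := by rw [mulVec_mulVec]
        _ = -((G⁻¹)ᵀ *ᵥ (Hᵀ *ᵥ lm)) := by rw [h1, Matrix.mulVec_neg]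
      have hx_eq : x = G⁻¹ *ᵥ (Qh *ᵥ rp) := by
        calc x = (G⁻¹ * G) *ᵥ x := by rw [hGmul', one_mulVec]
        _ = G⁻¹ *ᵥ (G *ᵥ x) := by rw [mulVec_mulVec]
        _ = G⁻¹ *ᵥ (Qh *ᵥ rp) := by rw [e4]
      have hSlm : (H * G⁻¹ * Q * (G⁻¹)ᵀ * Hᵀ + R) *ᵥ lm = 0 := by
        have hq : Q *ᵥ lp = Qh *ᵥ rp := by
          rw [e2, mulVec_mulVec, hQ]
        have h1 : (H * G⁻¹ * Q * (G⁻¹)ᵀ * Hᵀ) *ᵥ lm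
            = H *ᵥ (G⁻¹ *ᵥ (Q *ᵥ ((G⁻¹)ᵀ *ᵥ (Hᵀ *ᵥ lm)))) := by
          simp [mulVec_mulVec, Matrix.mul_assoc]
        have h2 : (G⁻¹)ᵀ *ᵥ (Hᵀ *ᵥ lm) = -lp := by rw [hlp_eq, neg_neg]
        rw [add_mulVec, h1, h2, Matrix.mulVec_neg, Matrix.mulVec_neg, Matrix.mulVec_neg,
          hq, ← hx_eq, e5, hR, ← mulVec_mulVec, ← e3, neg_add_cancel]
      have hlm0 : lm = 0 := hSinj lm hSlm
      have hlp0 : lp = 0 := by rw [hlp_eq, hlm0]; simp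
      have hrp0 : rp = 0 := by rw [e2, hlp0, mulVec_zero]
      have hrm0 : rm = 0 := by rw [e3, hlm0, mulVec_zero]
      have hx0 : x = 0 := by rw [hx_eq, hrp0, mulVec_zero, mulVec_zero]
      funext i
      rcases i with a | a | a | a | a
      · exact congrFun hx0 a
      · exact congrFun hrp0 a
      · exact congrFun hrm0 a
      · exact congrFun hlp0 a
      · exact congrFun hlm0 a
  · -- IsUnit S ↔ kernel condition
    rw [isUnit_iff_allker' (H * G⁻¹ * Q * (G⁻¹)ᵀ * Hᵀ + R)]
    constructor
    · intro h
      rw [Submodule.eq_bot_iff]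
      intro w hw
      rw [Submodule.mem_inf, LinearMap.mem_ker, LinearMap.mem_ker,
        Matrix.mulVecLin_apply, Matrix.mulVecLin_apply] at hw
      exact h w ((hSker' w).mpr hw)
    · intro h w hw
      obtain ⟨h1, h2⟩ := (hSker' w).mp hw
      exact (Submodule.eq_bot_iff _).mp h w (Submodule.mem_inf.mpr
        ⟨LinearMap.mem_ker.mpr (by rw [Matrix.mulVecLin_apply]; exact h1),
         LinearMap.mem_ker.mpr (by rw [Matrix.mulVecLin_apply]; exact h2)⟩)
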